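/- Let R be a commutative ring, G a finite commutative group, R[G] its group ring, and I the augmentation ideal of R[G]. Let M be a module over R[G], let γ ∈ G, let a be a natural number, let w ∈ M, and set z := (γ − 1)^a · w, where (γ − 1)^a is computed in R[G]. Then, in the tensor product M ⊗_R (R[G]/I^{a+1}), one has Σ_{σ ∈ G} (σ · z) ⊗ [σ^{−1}] = ( Σ_{σ ∈ G} σ · w ) ⊗ [(γ − 1)^a], where [x] denotes the class of x ∈ R[G] in the quotient R[G]/I^{a+1}. -/

import Mathlib

open TensorProduct

/-- Reindexing lemma: for any `x` in the group algebra,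
`Σ_σ ((σ * x) • w) ⊗ [σ⁻¹] = Σ_τ (τ • w) ⊗ [x * τ⁻¹]`. -/
lemma darmon_reindex
    (R : Type*) [CommRing R] (G : Type*) [CommGroup G] [Fintype G]
    (M : Type*) [AddCommGroup M] [Module R M] [Module (MonoidAlgebra R G) M]
    [IsScalarTower R (MonoidAlgebra R G) M]
    (J : Ideal (MonoidAlgebra R G)) (w : M) (x : MonoidAlgebra R G) :
    ∑ σ : G, ((MonoidAlgebra.of R G σ * x) • w) ⊗ₜ[R]
        (Ideal.Quotient.mk J (MonoidAlgebra.of R G σ⁻¹))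
      = ∑ τ : G, (MonoidAlgebra.of R G τ • w) ⊗ₜ[R]
        (Ideal.Quotient.mk J (x * MonoidAlgebra.of R G τ⁻¹)) := by
  induction x using MonoidAlgebra.induction_on with
  | of g =>
      refine Fintype.sum_equiv (Equiv.mulRight g) _ _ fun σ => ?_
      have h1 : g * (σ * g)⁻¹ = σ⁻¹ := by group
      simp only [Equiv.coe_mulRight, ← map_mul, h1]
  | add f g hf hg =>
      simp only [mul_add, add_mul, add_smul, map_add, TensorProduct.tmul_add,
        TensorProduct.add_tmul, Finset.sum_add_distrib, hf, hg]
  | smul r f hf =>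
      have h2 : ∀ y : MonoidAlgebra R G, Ideal.Quotient.mk J (r • y) = r • Ideal.Quotient.mk J y :=
        fun y => map_smul (Ideal.Quotient.mkₐ R J) r y
      simp only [mul_smul_comm, smul_mul_assoc, map_smul, smul_assoc, h2,
        ← TensorProduct.smul_tmul', TensorProduct.tmul_smul, ← Finset.smul_sum]
      exact congrArg (r • ·) hf

/-- Let `R` be a commutative ring, `G` a finite commutative group, `R[G]` its group
ring, and `I` the augmentation ideal of `R[G]` (the kernel of the `R`-algebra map
`R[G] → R` sending every group element to `1`).  Let `M` be a module over `R[G]`, let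
`γ ∈ G`, let `a` be a natural number, let `w ∈ M`, and set `z := (γ − 1)^a · w`.
Then, in `M ⊗_R (R[G]/I^{a+1})`, one has
`Σ_{σ ∈ G} (σ · z) ⊗ [σ⁻¹] = (Σ_{σ ∈ G} σ · w) ⊗ [(γ − 1)^a]`. -/
theorem darmon_norm_eq
    (R : Type*) [CommRing R] (G : Type*) [CommGroup G] [Fintype G]
    (M : Type*) [AddCommGroup M] [Module R M] [Module (MonoidAlgebra R G) M]
    [IsScalarTower R (MonoidAlgebra R G) M]
    (I : Ideal (MonoidAlgebra R G))
    (hI : I = RingHom.ker (MonoidAlgebra.lift R R G 1))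
    (γ : G) (a : ℕ) (w z : M)
    (hz : z = (MonoidAlgebra.of R G γ - 1) ^ a • w) :
    ∑ σ : G, (MonoidAlgebra.of R G σ • z) ⊗ₜ[R]
        (Ideal.Quotient.mk (I ^ (a + 1)) (MonoidAlgebra.of R G σ⁻¹))
      = (∑ σ : G, MonoidAlgebra.of R G σ • w) ⊗ₜ[R]
        (Ideal.Quotient.mk (I ^ (a + 1)) ((MonoidAlgebra.of R G γ - 1) ^ a)) := by
  -- membership facts
  have hmem : ∀ g : G, MonoidAlgebra.of R G g - 1 ∈ I := by
    intro g
    simp [hI, RingHom.mem_ker, MonoidAlgebra.lift_of]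
  have hxa : (MonoidAlgebra.of R G γ - 1) ^ a ∈ I ^ a := Ideal.pow_mem_pow (hmem γ) a
  have hquot : ∀ τ : G,
      Ideal.Quotient.mk (I ^ (a + 1))
        ((MonoidAlgebra.of R G γ - 1) ^ a * MonoidAlgebra.of R G τ⁻¹)
      = Ideal.Quotient.mk (I ^ (a + 1)) ((MonoidAlgebra.of R G γ - 1) ^ a) := by
    intro τ
    rw [Ideal.Quotient.mk_eq_mk_iff_sub_mem]
    have : (MonoidAlgebra.of R G γ - 1) ^ a * MonoidAlgebra.of R G τ⁻¹ -
        (MonoidAlgebra.of R G γ - 1) ^ a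
        = (MonoidAlgebra.of R G γ - 1) ^ a * (MonoidAlgebra.of R G τ⁻¹ - 1) := by ring
    rw [this, pow_succ]
    exact Ideal.mul_mem_mul hxa (hmem τ⁻¹)
  calc
    ∑ σ : G, (MonoidAlgebra.of R G σ • z) ⊗ₜ[R]
        (Ideal.Quotient.mk (I ^ (a + 1)) (MonoidAlgebra.of R G σ⁻¹))
        = ∑ σ : G, ((MonoidAlgebra.of R G σ * (MonoidAlgebra.of R G γ - 1) ^ a) • w) ⊗ₜ[R]
            (Ideal.Quotient.mk (I ^ (a + 1)) (MonoidAlgebra.of R G σ⁻¹)) := by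
          simp only [hz, mul_smul]
    _ = ∑ τ : G, (MonoidAlgebra.of R G τ • w) ⊗ₜ[R]
            (Ideal.Quotient.mk (I ^ (a + 1))
              ((MonoidAlgebra.of R G γ - 1) ^ a * MonoidAlgebra.of R G τ⁻¹)) :=
          darmon_reindex R G M (I ^ (a + 1)) w ((MonoidAlgebra.of R G γ - 1) ^ a)
    _ = ∑ τ : G, (MonoidAlgebra.of R G τ • w) ⊗ₜ[R]
            (Ideal.Quotient.mk (I ^ (a + 1)) ((MonoidAlgebra.of R G γ - 1) ^ a)) := by
          simp only [hquot]
    _ = (∑ σ : G, MonoidAlgebra.of R G σ • w) ⊗ₜ[R]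
            (Ideal.Quotient.mk (I ^ (a + 1)) ((MonoidAlgebra.of R G γ - 1) ^ a)) :=
          (TensorProduct.sum_tmul _ _ _).symm
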